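/- Let h be the block matrix h = [[h₁, h₂],[h₃, h₄]] of the balanced metric of the Siegel–Jacobi ball, with entries h_{ij} = μ M̄_{ij}, h_{i,pq} = μ(η_q M̄_{ip} + η_p M̄_{iq}) f_{pq}, h_{pq,i} = μ(η̄_q M̄_{pi} + η̄_p M̄_{qi}) f_{pq}, and h_{pq,mn} = (k/2) h^k_{pq,mn} + μ h^μ_{pq,mn}, where h^μ_{pq,mn} = [η̄_p(η_n M̄_{qm} + η_m M̄_{qn}) + η̄_q(η_n M̄_{pm} + η_m M̄_{pn})] f_{pq} f_{mn}. Then h₃ h₁⁻¹ h₂ = μ h^μ, i.e., (h₃ h₁⁻¹ h₂)_{pq,mn} = μ h^μ_{pq,mn} for all p ≤ q, m ≤ n. -/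

import Mathlib

open Matrix BigOperators

noncomputable section

/-- entrywise complex conjugation of a matrix -/
def mconj {m n : Type*} (A : Matrix m n ℂ) : Matrix m n ℂ := A.map (starRingEnd ℂ)

/-- Kronecker delta in ℂ -/
def kd {d : ℕ} (i j : Fin d) : ℂ := if i = j then 1 else 0

/-- f_{pq} = 1 - δ_{pq}/2 -/
def fsym {d : ℕ} (p q : Fin d) : ℂ := 1 - kd p q / 2

/-- h₃ h₁⁻¹ h₂ = μ h^μ for the blocks of the balanced metric of the
Siegel--Jacobi ball. -/
theorem schur_offdiag (d : ℕ) (W : Matrix (Fin d) (Fin d) ℂ) (hWsymm : Wᵀ = W)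
    (hinv : IsUnit ((1 : Matrix (Fin d) (Fin d) ℂ) - W * mconj W))
    (M Mb : Matrix (Fin d) (Fin d) ℂ)
    (hM : M = (1 - W * mconj W)⁻¹) (hMb : Mb = mconj M)
    (η : Fin d → ℂ) (ηb : Fin d → ℂ) (hηb : ηb = fun i => starRingEnd ℂ (η i))
    (μ k : ℝ) (hμ : 0 < μ)
    (h2 : Fin d → Fin d → Fin d → ℂ)
    (hh2 : ∀ i p q, h2 i p q = (μ : ℂ) * (η q * Mb i p + η p * Mb i q) * fsym p q)
    (h3 : Fin d → Fin d → Fin d → ℂ)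
    (hh3 : ∀ p q i, h3 p q i = (μ : ℂ) * (ηb q * Mb p i + ηb p * Mb q i) * fsym p q)
    (hμmat : Fin d → Fin d → Fin d → Fin d → ℂ)
    (hhμ : ∀ p q m n, hμmat p q m n =
      (ηb p * (η n * Mb q m + η m * Mb q n) + ηb q * (η n * Mb p m + η m * Mb p n))
        * fsym p q * fsym m n) :
    ∀ p q m n : Fin d, p ≤ q → m ≤ n →
      (∑ i : Fin d, ∑ j : Fin d, h3 p q i * ((1/(μ:ℂ)) * Mb⁻¹ i j) * h2 j m n)
        = (μ : ℂ) * hμmat p q m n := by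
  classical
  intro p q m n _ _
  have hμne : (μ : ℂ) ≠ 0 := by exact_mod_cast hμ.ne'
  -- Mb is invertible
  have hMunit : IsUnit M.det := by
    have hA : IsUnit ((1 : Matrix (Fin d) (Fin d) ℂ) - W * mconj W).det :=
      (Matrix.isUnit_iff_isUnit_det _).mp hinv
    rw [hM, Matrix.det_nonsing_inv]
    exact isUnit_iff_ne_zero.mpr (Ring.isUnit_iff_inverse_ne_zero.mp hA)
  have hMbdet : IsUnit Mb.det := by
    rw [hMb, mconj, show M.map ⇑(starRingEnd ℂ) = (starRingEnd ℂ).mapMatrix M from rfl,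
      ← RingHom.map_det]
    exact hMunit.map (starRingEnd ℂ)
  have hMbinv : Mb * Mb⁻¹ = 1 := Matrix.mul_nonsing_inv _ hMbdet
  -- key contraction identity
  have key : ∀ a b : Fin d, (∑ i : Fin d, ∑ j : Fin d, Mb a i * Mb⁻¹ i j * Mb j b) = Mb a b := by
    intro a b
    have h1 : Mb * Mb⁻¹ * Mb = Mb := by rw [hMbinv, one_mul]
    calc (∑ i : Fin d, ∑ j : Fin d, Mb a i * Mb⁻¹ i j * Mb j b)
        = ∑ j : Fin d, (∑ i : Fin d, Mb a i * Mb⁻¹ i j) * Mb j b := by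
          rw [Finset.sum_comm]
          exact Finset.sum_congr rfl fun j _ => (Finset.sum_mul _ _ _).symm
      _ = (Mb * Mb⁻¹ * Mb) a b := by simp [Matrix.mul_apply]
      _ = Mb a b := by rw [h1]
  calc (∑ i : Fin d, ∑ j : Fin d, h3 p q i * ((1/(μ:ℂ)) * Mb⁻¹ i j) * h2 j m n)
      = ∑ i : Fin d, ∑ j : Fin d, ((μ:ℂ) * fsym p q * fsym m n) *
          (ηb q * η n * (Mb p i * Mb⁻¹ i j * Mb j m) +
           ηb q * η m * (Mb p i * Mb⁻¹ i j * Mb j n) +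
           ηb p * η n * (Mb q i * Mb⁻¹ i j * Mb j m) +
           ηb p * η m * (Mb q i * Mb⁻¹ i j * Mb j n)) := by
        refine Finset.sum_congr rfl fun i _ => Finset.sum_congr rfl fun j _ => ?_
        rw [hh3, hh2]
        field_simp
        ring
    _ = ((μ:ℂ) * fsym p q * fsym m n) *
          (ηb q * η n * (∑ i : Fin d, ∑ j : Fin d, Mb p i * Mb⁻¹ i j * Mb j m) +
           ηb q * η m * (∑ i : Fin d, ∑ j : Fin d, Mb p i * Mb⁻¹ i j * Mb j n) +
           ηb p * η n * (∑ i : Fin d, ∑ j : Fin d, Mb q i * Mb⁻¹ i j * Mb j m) +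
           ηb p * η m * (∑ i : Fin d, ∑ j : Fin d, Mb q i * Mb⁻¹ i j * Mb j n)) := by
        simp only [← Finset.mul_sum, Finset.sum_add_distrib]
    _ = (μ : ℂ) * hμmat p q m n := by
        rw [key, key, key, key, hhμ]
        ring
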